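/- Let Φ be proper convex lsc, B β-cocoercive, 0 < μ < 2β, 0 < h < δ with δ = 1/2 + min{1, β/μ}, and assume S = {z : 0 ∈ ∂Φ(z) + Bz} ≠ ∅. Then the (FBN) iteration x_k = prox_{μΦ}(y_k), y_{k+1} = (1 − h)y_k + h(x_k − μB(x_k)), generates sequences such that (y_k) converges weakly to some ȳ with prox_{μΦ}(ȳ) ∈ S, (x_k) converges weakly to x̄ = prox_{μΦ}(ȳ) ∈ S, B(x_k) → Bx̄ strongly, and Σ_k ‖x_{k+1} − x_k‖² < ∞, Σ_k ‖y_{k+1} − y_k‖² < ∞. -/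

import Mathlib

open scoped RealInnerProductSpace
open Filter Topology

/-- `v` belongs to the convex subdifferential of `Φ` at `x`. -/
def InSubdiff {H : Type*} [NormedAddCommGroup H] [InnerProductSpace ℝ H]
    (Φ : H → EReal) (x v : H) : Prop :=
  ∀ y : H, Φ x + ((⟪v, y - x⟫ : ℝ) : EReal) ≤ Φ y


lemma subdiff_ne_top {H : Type*} [NormedAddCommGroup H] [InnerProductSpace ℝ H]
    {Φ : H → EReal} {x0 : H} (htop : Φ x0 ≠ ⊤)
    {c vc : H} (hc : InSubdiff Φ c vc) : Φ c ≠ ⊤ := by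
  intro hT
  have := hc x0
  rw [hT, EReal.top_add_coe] at this
  exact htop (top_le_iff.mp this)

lemma subdiff_mono {H : Type*} [NormedAddCommGroup H] [InnerProductSpace ℝ H]
    {Φ : H → EReal} (hbot : ∀ x, Φ x ≠ ⊥) {x0 : H} (htop : Φ x0 ≠ ⊤)
    {a b va vb : H} (ha : InSubdiff Φ a va) (hb : InSubdiff Φ b vb) :
    0 ≤ ⟪va - vb, a - b⟫ := by
  have hA : Φ a = ((Φ a).toReal : EReal) := (EReal.coe_toReal (subdiff_ne_top htop ha) (hbot a)).symm
  have hB : Φ b = ((Φ b).toReal : EReal) := (EReal.coe_toReal (subdiff_ne_top htop hb) (hbot b)).symm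
  have h1 := ha b
  have h2 := hb a
  rw [hA, hB, ← EReal.coe_add, EReal.coe_le_coe_iff] at h1
  rw [hA, hB, ← EReal.coe_add, EReal.coe_le_coe_iff] at h2
  have e1 : ⟪va - vb, a - b⟫ = - ⟪va, b - a⟫ - ⟪vb, a - b⟫ := by
    rw [inner_sub_left, show a - b = -(b - a) by abel, inner_neg_right]
  rw [e1]; linarith

lemma inner_tendsto_strong_weak {H : Type*} [NormedAddCommGroup H] [InnerProductSpace ℝ H]
    {a b : ℕ → H} {a0 b0 : H} {M : ℝ}
    (ha : Tendsto a atTop (𝓝 a0))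
    (hb : ∀ v : H, Tendsto (fun j => ⟪b j, v⟫) atTop (𝓝 ⟪b0, v⟫))
    (hM : ∀ j, ‖b j‖ ≤ M) :
    Tendsto (fun j => ⟪a j, b j⟫) atTop (𝓝 ⟪a0, b0⟫) := by
  have h1 : Tendsto (fun j => ⟪a j - a0, b j⟫) atTop (𝓝 0) := by
    have hbound : ∀ j, ‖⟪a j - a0, b j⟫‖ ≤ ‖a j - a0‖ * M := by
      intro j
      calc ‖⟪a j - a0, b j⟫‖ ≤ ‖a j - a0‖ * ‖b j‖ := norm_inner_le_norm _ _
        _ ≤ ‖a j - a0‖ * M := mul_le_mul_of_nonneg_left (hM j) (norm_nonneg _)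
    have hlim : Tendsto (fun j => ‖a j - a0‖ * M) atTop (𝓝 0) := by
      have := (tendsto_iff_norm_sub_tendsto_zero.mp ha).mul_const M
      simpa using this
    exact squeeze_zero_norm hbound hlim
  have h2 : Tendsto (fun j => ⟪a0, b j⟫) atTop (𝓝 ⟪a0, b0⟫) := by
    have := hb a0
    simpa [real_inner_comm] using this
  have := h1.add h2
  simp only [zero_add] at this
  refine this.congr (fun j => ?_)
  rw [inner_sub_left]; ring

lemma key_consts {H : Type*} [NormedAddCommGroup H] [InnerProductSpace ℝ H]
    (β μ h : ℝ) (hβ : 0 < β) (hμ0 : 0 < μ) (hμβ : μ < 2 * β)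
    (hh0 : 0 < h) (hhδ : h < 1 / 2 + min 1 (β / μ)) :
    ∃ cA cD : ℝ, 0 < cA ∧ 0 < cD ∧ ∀ u d : H,
      cA * ‖u‖ ^ 2 + cD * ‖d‖ ^ 2 ≤
        h * (2 - h) * ‖u‖ ^ 2 + h * μ * (2 * β - h * μ) * ‖d‖ ^ 2
          + 2 * h * μ * (1 - h) * ⟪u, d⟫ := by
  have hkey : h * (2 * β) < 4 * β - μ := by
    rcases le_or_gt 1 (β / μ) with hc | hc
    · rw [min_eq_left hc] at hhδ
      have hμβ' : μ ≤ β := by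
        rw [le_div_iff₀ hμ0] at hc; linarith
      nlinarith
    · rw [min_eq_right hc.le] at hhδ
      have hβμ : β < μ := by
        rw [div_lt_one hμ0] at hc; exact hc
      have e1 : β / μ * μ = β := div_mul_cancel₀ β (ne_of_gt hμ0)
      have h1 : h * μ < μ / 2 + β := by
        nlinarith [mul_lt_mul_of_pos_right hhδ hμ0]
      nlinarith [mul_lt_mul_of_pos_right h1 (by linarith : (0:ℝ) < 2 * β),
        mul_pos (by linarith : (0:ℝ) < 2 * β - μ) (by linarith : (0:ℝ) < μ - β)]
  have h2 : 0 < 2 - h := by nlinarith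
  have h2b : 0 < 2 * β - h * μ := by nlinarith [sq_nonneg (2 * β - μ)]
  have hCC : μ * (1 - h) ^ 2 < (2 - h) * (2 * β - h * μ) := by nlinarith
  set g : ℝ := |1 - h| with hgdef
  have hg0 : 0 ≤ g := abs_nonneg _
  have hg2 : g ^ 2 = (1 - h) ^ 2 := sq_abs _
  set t : ℝ := Real.sqrt ((2 - h) / (μ * (2 * β - h * μ))) with htdef
  have htpos : 0 < t := Real.sqrt_pos.mpr (by positivity)
  have ht2' : t ^ 2 * (μ * (2 * β - h * μ)) = 2 - h := by
    rw [htdef, Real.sq_sqrt (by positivity : (0:ℝ) ≤ (2 - h) / (μ * (2 * β - h * μ)))]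
    field_simp
  have hA : μ * g * t < 2 - h := by
    have e : (μ * g * t) ^ 2 * (μ * (2 * β - h * μ)) = μ ^ 2 * (1 - h) ^ 2 * (2 - h) := by
      have e0 : (μ * g * t) ^ 2 * (μ * (2 * β - h * μ))
          = μ ^ 2 * g ^ 2 * (t ^ 2 * (μ * (2 * β - h * μ))) := by ring
      rw [e0, ht2', hg2]
    have P2 : (μ * (1 - h) ^ 2) * (μ * (2 - h)) < ((2 - h) * (2 * β - h * μ)) * (μ * (2 - h)) :=
      mul_lt_mul_of_pos_right hCC (mul_pos hμ0 h2)
    have hsq : (μ * g * t) ^ 2 < (2 - h) ^ 2 := by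
      nlinarith [e, P2, mul_pos hμ0 h2b, mul_pos (mul_pos hμ0 hμ0) h2]
    exact lt_of_pow_lt_pow_left₀ 2 h2.le hsq
  have hB : g * t⁻¹ < 2 * β - h * μ := by
    rw [← div_eq_mul_inv, div_lt_iff₀ htpos]
    have e2 : ((2 * β - h * μ) * t) ^ 2 * (μ * (2 * β - h * μ))
        = (2 * β - h * μ) ^ 2 * (2 - h) := by
      have e0 : ((2 * β - h * μ) * t) ^ 2 * (μ * (2 * β - h * μ))
          = (2 * β - h * μ) ^ 2 * (t ^ 2 * (μ * (2 * β - h * μ))) := by ring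
      rw [e0, ht2']
    have P1 : (μ * (1 - h) ^ 2) * (2 * β - h * μ)
        < ((2 - h) * (2 * β - h * μ)) * (2 * β - h * μ) :=
      mul_lt_mul_of_pos_right hCC h2b
    have hsq : g ^ 2 < ((2 * β - h * μ) * t) ^ 2 := by
      rw [hg2]
      nlinarith [e2, P1, mul_pos hμ0 h2b]
    exact lt_of_pow_lt_pow_left₀ 2 (mul_pos h2b htpos).le hsq
  refine ⟨h * ((2 - h) - μ * g * t), h * μ * ((2 * β - h * μ) - g * t⁻¹), ?_, ?_, ?_⟩
  · have : 0 < (2 - h) - μ * g * t := by linarith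
    positivity
  · have : 0 < (2 * β - h * μ) - g * t⁻¹ := by linarith
    positivity
  · intro u d
    have AM : 2 * (‖u‖ * ‖d‖) ≤ t * ‖u‖ ^ 2 + ‖d‖ ^ 2 * t⁻¹ := by
      rw [← sub_nonneg]
      have e : t * ‖u‖ ^ 2 + ‖d‖ ^ 2 * t⁻¹ - 2 * (‖u‖ * ‖d‖) = (t * ‖u‖ - ‖d‖) ^ 2 * t⁻¹ := by
        field_simp; ring
      rw [e]; positivity
    have f1 : -(g * (‖u‖ * ‖d‖)) ≤ (1 - h) * ⟪u, d⟫ := by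
      have h1 : |(1 - h) * ⟪u, d⟫| ≤ g * (‖u‖ * ‖d‖) := by
        rw [abs_mul]
        exact mul_le_mul_of_nonneg_left (abs_real_inner_le_norm u d) hg0
      linarith [neg_abs_le ((1 - h) * ⟪u, d⟫)]
    have s1 : 2 * h * μ * (-(g * (‖u‖ * ‖d‖))) ≤ 2 * h * μ * ((1 - h) * ⟪u, d⟫) :=
      mul_le_mul_of_nonneg_left f1 (by positivity)
    have s2 : h * μ * g * (2 * (‖u‖ * ‖d‖)) ≤ h * μ * g * (t * ‖u‖ ^ 2 + ‖d‖ ^ 2 * t⁻¹) :=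
      mul_le_mul_of_nonneg_left AM (by positivity)
    nlinarith [s1, s2]



lemma norm_sq_zero_of_nonpos {H : Type*} [NormedAddCommGroup H] {v : H}
    (hv : ‖v‖ ^ 2 ≤ 0) : v = 0 := by
  have h1 : ‖v‖ ^ 2 = 0 := le_antisymm hv (sq_nonneg _)
  exact norm_eq_zero.mp (pow_eq_zero_iff two_ne_zero |>.mp h1)

lemma prox_fixed {H : Type*} [NormedAddCommGroup H] [InnerProductSpace ℝ H]
    {Φ : H → EReal} (hbot : ∀ x, Φ x ≠ ⊥) {x0 : H} (htop : Φ x0 ≠ ⊤)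
    {μ : ℝ} (hμ0 : 0 < μ) {B : H → H}
    {prox : H → H} (hprox : ∀ w : H, InSubdiff Φ (prox w) ((1 / μ) • (w - prox w)))
    {z : H} (hz : InSubdiff Φ z (-B z)) :
    prox (z - μ • B z) = z := by
  have hBz : InSubdiff Φ z ((1 / μ) • ((z - μ • B z) - z)) := by
    have e : (1 / μ) • ((z - μ • B z) - z) = -B z := by
      have e0 : (z - μ • B z) - z = -(μ • B z) := by abel
      rw [e0, smul_neg, one_div, inv_smul_smul₀ (ne_of_gt hμ0)]
    rw [e]; exact hz
  have hm := subdiff_mono hbot htop (hprox (z - μ • B z)) hBz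
  have hcomb : (1 / μ) • ((z - μ • B z) - prox (z - μ • B z))
      - (1 / μ) • ((z - μ • B z) - z) = (1 / μ) • (z - prox (z - μ • B z)) := by
    module
  rw [hcomb, real_inner_smul_left] at hm
  have e2 : ⟪z - prox (z - μ • B z), prox (z - μ • B z) - z⟫
      = -‖prox (z - μ • B z) - z‖ ^ 2 := by
    rw [show z - prox (z - μ • B z) = -(prox (z - μ • B z) - z) by abel, inner_neg_left,
      real_inner_self_eq_norm_sq]
  rw [e2] at hm
  have hμinv : 0 < 1 / μ := by positivity
  have h0 : ‖prox (z - μ • B z) - z‖ ^ 2 ≤ 0 := by nlinarith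
  exact sub_eq_zero.mp (norm_sq_zero_of_nonpos h0)

lemma fejer_step {H : Type*} [NormedAddCommGroup H] [InnerProductSpace ℝ H]
    {Φ : H → EReal} (hbot : ∀ x, Φ x ≠ ⊥) {x0 : H} (htop : Φ x0 ≠ ⊤)
    (β μ h cA cD : ℝ) (hμ0 : 0 < μ) (hh0 : 0 < h)
    (hkeyineq : ∀ u d : H, cA * ‖u‖ ^ 2 + cD * ‖d‖ ^ 2 ≤
        h * (2 - h) * ‖u‖ ^ 2 + h * μ * (2 * β - h * μ) * ‖d‖ ^ 2
          + 2 * h * μ * (1 - h) * ⟪u, d⟫)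
    (B : H → H) (hcoco : ∀ x y : H, β * ‖B x - B y‖ ^ 2 ≤ ⟪B x - B y, x - y⟫)
    (prox : H → H) (hprox : ∀ w : H, InSubdiff Φ (prox w) ((1 / μ) • (w - prox w)))
    (x y : ℕ → H) (hxk : ∀ k : ℕ, x k = prox (y k))
    (hyk : ∀ k : ℕ, y (k + 1) = (1 - h) • y k + h • (x k - μ • B (x k)))
    (z : H) (hz : InSubdiff Φ z (-B z)) (k : ℕ) :
    ‖y (k + 1) - (z - μ • B z)‖ ^ 2 + cA * ‖y k - x k + μ • B z‖ ^ 2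
      + cD * ‖B (x k) - B z‖ ^ 2 ≤ ‖y k - (z - μ • B z)‖ ^ 2 := by
  have hproxq : prox (z - μ • B z) = z := prox_fixed hbot htop hμ0 hprox hz
  -- firm nonexpansiveness at (y k, z - μ • B z)
  have hzq : InSubdiff Φ z ((1 / μ) • ((z - μ • B z) - z)) := by
    have h' := hprox (z - μ • B z)
    rwa [hproxq] at h'
  have hm2 := subdiff_mono hbot htop (hprox (y k)) hzq
  rw [← hxk k] at hm2
  have hcomb2 : (1 / μ) • (y k - x k) - (1 / μ) • ((z - μ • B z) - z)
      = (1 / μ) • (y k - x k + μ • B z) := by module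
  rw [hcomb2, real_inner_smul_left] at hm2
  have hpu : 0 ≤ ⟪y k - x k + μ • B z, x k - z⟫ := by
    have h' := mul_nonneg hμ0.le hm2
    rwa [← mul_assoc, mul_one_div, div_self (ne_of_gt hμ0), one_mul] at h'
  have hpd := hcoco (x k) z
  set u : H := y k - x k + μ • B z with hu
  set d : H := B (x k) - B z with hd
  set p : H := x k - z with hp
  -- vector identities
  have hy0 : y k - (z - μ • B z) = p + u := by rw [hu, hp]; module
  have hy1 : y (k + 1) - (z - μ • B z) = p + (1 - h) • u + (-(h * μ)) • d := by
    rw [hu, hp, hd, hyk k]; module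
  have expand : ∀ (a b c : H) (s r : ℝ), ‖a + s • b + r • c‖ ^ 2
      = ‖a‖ ^ 2 + s ^ 2 * ‖b‖ ^ 2 + r ^ 2 * ‖c‖ ^ 2 + 2 * s * ⟪a, b⟫ + 2 * r * ⟪a, c⟫
        + 2 * s * r * ⟪b, c⟫ := by
    intro a b c s r
    rw [norm_add_sq_real, norm_add_sq_real]
    simp only [inner_add_left, real_inner_smul_left, real_inner_smul_right, norm_smul,
      mul_pow, sq_abs, Real.norm_eq_abs]
    ring
  rw [hy1, expand p u d, hy0, norm_add_sq_real p u]
  have hkey := hkeyineq u d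
  have hpu2 : 0 ≤ ⟪p, u⟫ := by rw [real_inner_comm]; exact hpu
  have hpd2 : β * ‖d‖ ^ 2 ≤ ⟪p, d⟫ := by rw [real_inner_comm]; exact hpd
  have hpd' : 2 * h * μ * (β * ‖d‖ ^ 2) ≤ 2 * h * μ * ⟪p, d⟫ :=
    mul_le_mul_of_nonneg_left hpd2 (by positivity)
  have hpu' : 0 ≤ 2 * h * ⟪p, u⟫ := mul_nonneg (by positivity) hpu2
  nlinarith [hkey, hpd', hpu']


lemma exists_weak_limit_subseq {H : Type*} [NormedAddCommGroup H] [InnerProductSpace ℝ H]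
    [CompleteSpace H] (y : ℕ → H) (C : ℝ) (hC : ∀ k, ‖y k‖ ≤ C) :
    ∃ φ : ℕ → ℕ, StrictMono φ ∧ ∃ p : H,
      ∀ w : H, Tendsto (fun j => ⟪y (φ j), w⟫) atTop (𝓝 ⟪p, w⟫) := by
  have hC0 : 0 ≤ C := (norm_nonneg (y 0)).trans (hC 0)
  have hbnd : ∀ k w, |⟪y k, w⟫| ≤ C * ‖w‖ := fun k w =>
    (abs_real_inner_le_norm _ _).trans (mul_le_mul_of_nonneg_right (hC k) (norm_nonneg w))
  -- diagonal extraction via compactness of a countable product of intervals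
  let X := ∀ n : ℕ, Set.Icc (-(C * ‖y n‖)) (C * ‖y n‖)
  let seq : ℕ → X := fun k n => ⟨⟪y k, y n⟫, by
    rcases abs_le.mp (hbnd k (y n)) with ⟨h1, h2⟩
    exact ⟨h1, h2⟩⟩
  obtain ⟨L, φ, hφ, hconv⟩ := CompactSpace.tendsto_subseq seq
  refine ⟨φ, hφ, ?_⟩
  have hcomp : ∀ n : ℕ, Tendsto (fun j => ⟪y (φ j), y n⟫) atTop (𝓝 (L n : ℝ)) := by
    intro n
    have h1 : Tendsto (fun j => (seq ∘ φ) j n) atTop (𝓝 (L n)) := tendsto_pi_nhds.mp hconv n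
    exact (continuous_subtype_val.tendsto _).comp h1
  -- the set of good test vectors
  set G : Set H := {w | ∃ l : ℝ, Tendsto (fun j => ⟪y (φ j), w⟫) atTop (𝓝 l)} with hG
  have hrange : ∀ n, y n ∈ G := fun n => ⟨L n, hcomp n⟩
  have hspan : ∀ w ∈ Submodule.span ℝ (Set.range y), w ∈ G := by
    intro w hw
    induction hw using Submodule.span_induction with
    | mem w hw => obtain ⟨n, rfl⟩ := hw; exact hrange n
    | zero => exact ⟨0, by simpa using tendsto_const_nhds⟩
    | add w w' _ _ hw hw' =>
        obtain ⟨l, hl⟩ := hw; obtain ⟨l', hl'⟩ := hw'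
        exact ⟨l + l', by simpa [inner_add_right] using hl.add hl'⟩
    | smul c w _ hw =>
        obtain ⟨l, hl⟩ := hw
        exact ⟨c * l, by simpa [real_inner_smul_right] using hl.const_mul c⟩
  have hclosed : ∀ w ∈ closure (Submodule.span ℝ (Set.range y) : Set H), w ∈ G := by
    intro w hw
    have hcauchy : CauchySeq (fun j => ⟪y (φ j), w⟫) := by
      rw [Metric.cauchySeq_iff]
      intro ε hε
      obtain ⟨w', hw', hdist⟩ := Metric.mem_closure_iff.mp hw (ε / 3 / (C + 1))
        (by positivity)
      obtain ⟨l', hl'⟩ := hspan w' hw'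
      obtain ⟨N, hN⟩ := Metric.cauchySeq_iff.mp hl'.cauchySeq (ε / 3) (by positivity)
      refine ⟨N, fun m hm n hn => ?_⟩
      have key : ∀ k, |⟪y (φ k), w⟫ - ⟪y (φ k), w'⟫| ≤ ε / 3 := by
        intro k
        have : ⟪y (φ k), w⟫ - ⟪y (φ k), w'⟫ = ⟪y (φ k), w - w'⟫ := by
          rw [inner_sub_right]
        rw [this]
        have h1 : |⟪y (φ k), w - w'⟫| ≤ C * ‖w - w'‖ := hbnd _ _
        have h2 : ‖w - w'‖ ≤ ε / 3 / (C + 1) := by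
          rw [← dist_eq_norm]; exact le_of_lt hdist
        have : C * ‖w - w'‖ ≤ C * (ε / 3 / (C + 1)) :=
          mul_le_mul_of_nonneg_left h2 hC0
        have hfrac : C * (ε / 3 / (C + 1)) ≤ ε / 3 := by
          have e : C * (ε / 3 / (C + 1)) = ε / 3 * (C / (C + 1)) := by ring
          have hle : C / (C + 1) ≤ 1 := by
            rw [div_le_one (by positivity)]; linarith
          rw [e]
          calc ε / 3 * (C / (C + 1)) ≤ ε / 3 * 1 :=
                mul_le_mul_of_nonneg_left hle (by positivity)
            _ = ε / 3 := by ring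
        linarith
      have hmn := hN m hm n hn
      rw [Real.dist_eq] at hmn ⊢
      have t1 := key m
      have t2 := key n
      have : ⟪y (φ m), w⟫ - ⟪y (φ n), w⟫ =
          (⟪y (φ m), w⟫ - ⟪y (φ m), w'⟫) + (⟪y (φ m), w'⟫ - ⟪y (φ n), w'⟫)
          + (⟪y (φ n), w'⟫ - ⟪y (φ n), w⟫) := by ring
      rw [this]
      calc |_| ≤ |⟪y (φ m), w⟫ - ⟪y (φ m), w'⟫| + |⟪y (φ m), w'⟫ - ⟪y (φ n), w'⟫|
            + |⟪y (φ n), w'⟫ - ⟪y (φ n), w⟫| := by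
              exact (abs_add_le _ _).trans (by gcongr; exact abs_add_le _ _)
        _ < ε := by
            have := abs_sub_comm ⟪y (φ n), w'⟫ ⟪y (φ n), w⟫
            rw [abs_sub_comm (⟪y (φ n), w'⟫)]
            linarith
      done
    obtain ⟨l, hl⟩ := cauchySeq_tendsto_of_complete hcauchy
    exact ⟨l, hl⟩
  -- the closed span
  set K := (Submodule.span ℝ (Set.range y)).topologicalClosure with hKdef
  haveI : CompleteSpace K := (Submodule.isClosed_topologicalClosure _).completeSpace_coe
  have hKG : ∀ u : K, (u : H) ∈ G := by
    intro u
    apply hclosed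
    have h : (u : H) ∈ ((Submodule.span ℝ (Set.range y)).topologicalClosure : Set H) := u.2
    rwa [Submodule.topologicalClosure_coe] at h
  have hyK : ∀ n, y n ∈ K :=
    fun n => Submodule.le_topologicalClosure _ (Submodule.subset_span (Set.mem_range_self n))
  -- the limit functional
  let g : K → ℝ := fun u => (hKG u).choose
  have hg : ∀ u : K, Tendsto (fun j => ⟪y (φ j), (u : H)⟫) atTop (𝓝 (g u)) :=
    fun u => (hKG u).choose_spec
  have hgadd : ∀ u v : K, g (u + v) = g u + g v := by
    intro u v
    refine tendsto_nhds_unique (hg (u + v)) ?_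
    have := (hg u).add (hg v)
    simpa [inner_add_right] using this
  have hgsmul : ∀ (c : ℝ) (u : K), g (c • u) = c * g u := by
    intro c u
    refine tendsto_nhds_unique (hg (c • u)) ?_
    have := (hg u).const_mul c
    simpa [real_inner_smul_right] using this
  let f : K →ₗ[ℝ] ℝ :=
    { toFun := g
      map_add' := hgadd
      map_smul' := hgsmul }
  have hfb : ∀ u : K, ‖f u‖ ≤ C * ‖u‖ := by
    intro u
    have h1 : Tendsto (fun j => |⟪y (φ j), (u : H)⟫|) atTop (𝓝 |g u|) := (hg u).abs
    have h2 : ∀ j, |⟪y (φ j), (u : H)⟫| ≤ C * ‖(u : H)‖ := fun j => hbnd _ _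
    have := le_of_tendsto h1 (Eventually.of_forall h2)
    rw [Real.norm_eq_abs]; exact this
  let f' : K →L[ℝ] ℝ := f.mkContinuous C hfb
  let p0 : K := (InnerProductSpace.toDual ℝ K).symm f'
  refine ⟨(p0 : H), ?_⟩
  intro w
  set Pw : K := K.orthogonalProjectionOnto w with hPw
  have horth : w - (Pw : H) ∈ Kᗮ := K.sub_starProjection_mem_orthogonal w
  have hsplit : ∀ u : K, ⟪(u : H), w⟫ = ⟪(u : H), (Pw : H)⟫ := by
    intro u
    have h0 : ⟪(u : H), w - (Pw : H)⟫ = 0 :=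
      (Submodule.mem_orthogonal K _).mp horth _ u.2
    rw [inner_sub_right] at h0
    linarith
  have hlim : Tendsto (fun j => ⟪y (φ j), w⟫) atTop (𝓝 (g Pw)) := by
    have := hg Pw
    refine this.congr (fun j => ?_)
    have := hsplit ⟨y (φ j), hyK (φ j)⟩
    simpa using this.symm
  have hval : g Pw = ⟪(p0 : H), w⟫ := by
    have h1 : (inner ℝ p0 Pw : ℝ) = f' Pw := InnerProductSpace.toDual_symm_apply
    have h2 : ((inner ℝ p0 Pw : ℝ) : ℝ) = ⟪(p0 : H), (Pw : H)⟫ := rfl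
    have h3 : f' Pw = g Pw := rfl
    rw [hsplit p0]
    rw [← h2, h1, h3]
  rwa [hval] at hlim

lemma prox_nonexp {H : Type*} [NormedAddCommGroup H] [InnerProductSpace ℝ H]
    {Φ : H → EReal} (hbot : ∀ x, Φ x ≠ ⊥) {x0 : H} (htop : Φ x0 ≠ ⊤)
    {μ : ℝ} (hμ0 : 0 < μ)
    {prox : H → H} (hprox : ∀ w : H, InSubdiff Φ (prox w) ((1 / μ) • (w - prox w)))
    (a b : H) : ‖prox a - prox b‖ ≤ ‖a - b‖ := by
  have hm := subdiff_mono hbot htop (hprox a) (hprox b)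
  have hcomb : (1 / μ) • (a - prox a) - (1 / μ) • (b - prox b)
      = (1 / μ) • ((a - b) - (prox a - prox b)) := by module
  rw [hcomb, real_inner_smul_left] at hm
  have h1 : 0 ≤ ⟪(a - b) - (prox a - prox b), prox a - prox b⟫ := by
    have h' := mul_nonneg hμ0.le hm
    rwa [← mul_assoc, mul_one_div, div_self (ne_of_gt hμ0), one_mul] at h'
  have h2 : ‖prox a - prox b‖ ^ 2 ≤ ⟪a - b, prox a - prox b⟫ := by
    rw [inner_sub_left, real_inner_self_eq_norm_sq] at h1; linarith
  have h3 := real_inner_le_norm (a - b) (prox a - prox b)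
  nlinarith [norm_nonneg (prox a - prox b), norm_nonneg (a - b)]

lemma sq_le_imp {a b : ℝ} (ha : 0 ≤ a) (hb : 0 ≤ b) (h : a ^ 2 ≤ b ^ 2) : a ≤ b := by
  nlinarith

set_option maxHeartbeats 1000000

/-- Convergence of the (FBN) algorithm
`x_k = prox_{μΦ}(y_k)`, `y_{k+1} = (1-h) y_k + h (x_k - μ B x_k)`:
`(y_k)` converges weakly to some `ȳ` with `prox_{μΦ}(ȳ) ∈ S`, `(x_k)`
converges weakly to `x̄ = prox_{μΦ}(ȳ) ∈ S`, `B x_k → B x̄` strongly, and the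
increments are square summable. -/
theorem FBN_convergence
    {H : Type*} [NormedAddCommGroup H] [InnerProductSpace ℝ H] [CompleteSpace H]
    (Φ : H → EReal)
    (hproper : (∀ x, Φ x ≠ ⊥) ∧ ∃ x, Φ x ≠ ⊤)
    (hconvex : ∀ x y : H, ∀ a b : ℝ, 0 ≤ a → 0 ≤ b → a + b = 1 →
      Φ (a • x + b • y) ≤ (a : EReal) * Φ x + (b : EReal) * Φ y)
    (hlsc : LowerSemicontinuous Φ)
    (β : ℝ) (hβ : 0 < β) (B : H → H)
    (hcoco : ∀ x y : H, β * ‖B x - B y‖ ^ 2 ≤ ⟪B x - B y, x - y⟫)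
    (μ h : ℝ) (hμ0 : 0 < μ) (hμβ : μ < 2 * β)
    (hh0 : 0 < h) (hhδ : h < 1 / 2 + min 1 (β / μ))
    (hS : ∃ z : H, InSubdiff Φ z (-B z))
    (prox : H → H)
    (hprox : ∀ w : H, InSubdiff Φ (prox w) ((1 / μ) • (w - prox w)))
    (x y : ℕ → H)
    (hxk : ∀ k : ℕ, x k = prox (y k))
    (hyk : ∀ k : ℕ, y (k + 1) = (1 - h) • y k + h • (x k - μ • B (x k))) :
    ∃ ybar : H,
      (∀ w : H, Tendsto (fun k => ⟪y k, w⟫) atTop (nhds ⟪ybar, w⟫)) ∧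
      InSubdiff Φ (prox ybar) (-B (prox ybar)) ∧
      (∀ w : H, Tendsto (fun k => ⟪x k, w⟫) atTop (nhds ⟪prox ybar, w⟫)) ∧
      Tendsto (fun k => B (x k)) atTop (nhds (B (prox ybar))) ∧
      (Summable fun k => ‖x (k + 1) - x k‖ ^ 2) ∧
      (Summable fun k => ‖y (k + 1) - y k‖ ^ 2) := by
  
  obtain ⟨hbot, x0, htop⟩ := hproper
  obtain ⟨z, hz⟩ := hS
  obtain ⟨cA, cD, hcA, hcD, hkeyineq⟩ := key_consts (H := H) β μ h hβ hμ0 hμβ hh0 hhδ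
  -- one-step Fejér inequality w.r.t. any solution
  have step : ∀ z' : H, InSubdiff Φ z' (-B z') → ∀ k : ℕ,
      ‖y (k + 1) - (z' - μ • B z')‖ ^ 2 + cA * ‖y k - x k + μ • B z'‖ ^ 2
        + cD * ‖B (x k) - B z'‖ ^ 2 ≤ ‖y k - (z' - μ • B z')‖ ^ 2 :=
    fun z' hz' k => fejer_step hbot htop β μ h cA cD hμ0 hh0 hkeyineq B hcoco
      prox hprox x y hxk hyk z' hz' k
  -- notation
  set q : H := z - μ • B z with hq
  have hVanti : Antitone (fun k => ‖y k - q‖ ^ 2) := by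
    apply antitone_nat_of_succ_le
    intro k
    have := step z hz k
    nlinarith [mul_nonneg hcA.le (sq_nonneg ‖y k - x k + μ • B z‖),
      mul_nonneg hcD.le (sq_nonneg ‖B (x k) - B z‖)]
  have hVle : ∀ k, ‖y k - q‖ ^ 2 ≤ ‖y 0 - q‖ ^ 2 := fun k => hVanti (Nat.zero_le k)
  -- summability of the decrements
  have hsum0 : ∀ n : ℕ, ∑ i ∈ Finset.range n,
      (cA * ‖y i - x i + μ • B z‖ ^ 2 + cD * ‖B (x i) - B z‖ ^ 2) ≤ ‖y 0 - q‖ ^ 2 := by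
    intro n
    have htel : ∀ n : ℕ, ∑ i ∈ Finset.range n,
        (cA * ‖y i - x i + μ • B z‖ ^ 2 + cD * ‖B (x i) - B z‖ ^ 2)
        ≤ ‖y 0 - q‖ ^ 2 - ‖y n - q‖ ^ 2 := by
      intro n
      induction n with
      | zero => simp
      | succ m ih =>
          rw [Finset.sum_range_succ]
          have := step z hz m
          linarith
    have := htel n
    nlinarith [sq_nonneg ‖y n - q‖]
  have hEnn : ∀ k : ℕ, 0 ≤ cA * ‖y k - x k + μ • B z‖ ^ 2 + cD * ‖B (x k) - B z‖ ^ 2 :=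
    fun k => add_nonneg (mul_nonneg hcA.le (sq_nonneg _)) (mul_nonneg hcD.le (sq_nonneg _))
  have hSumE : Summable (fun k => cA * ‖y k - x k + μ • B z‖ ^ 2 + cD * ‖B (x k) - B z‖ ^ 2) :=
    summable_of_sum_range_le hEnn hsum0
  have hSumA : Summable (fun k => ‖y k - x k + μ • B z‖ ^ 2) := by
    refine Summable.of_nonneg_of_le (fun k => sq_nonneg _) (fun k => ?_)
      (hSumE.mul_left (1 / cA))
    have := hEnn k
    have h2 : 0 ≤ cD * ‖B (x k) - B z‖ ^ 2 := mul_nonneg hcD.le (sq_nonneg _)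
    rw [mul_add]
    have e : 1 / cA * (cA * ‖y k - x k + μ • B z‖ ^ 2) = ‖y k - x k + μ • B z‖ ^ 2 := by
      field_simp
    rw [e]
    nlinarith [mul_nonneg (by positivity : (0:ℝ) ≤ 1 / cA) h2]
  have hSumD : Summable (fun k => ‖B (x k) - B z‖ ^ 2) := by
    refine Summable.of_nonneg_of_le (fun k => sq_nonneg _) (fun k => ?_)
      (hSumE.mul_left (1 / cD))
    have h2 : 0 ≤ cA * ‖y k - x k + μ • B z‖ ^ 2 := mul_nonneg hcA.le (sq_nonneg _)
    rw [mul_add]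
    have e : 1 / cD * (cD * ‖B (x k) - B z‖ ^ 2) = ‖B (x k) - B z‖ ^ 2 := by
      field_simp
    rw [e]
    nlinarith [mul_nonneg (by positivity : (0:ℝ) ≤ 1 / cD) h2]
  -- strong limits
  have sqrt_norm_tendsto : ∀ (v : ℕ → H), Tendsto (fun k => ‖v k‖ ^ 2) atTop (𝓝 0) →
      Tendsto v atTop (𝓝 0) := by
    intro v hv
    rw [tendsto_zero_iff_norm_tendsto_zero]
    have h1 : Tendsto (fun k => Real.sqrt (‖v k‖ ^ 2)) atTop (𝓝 (Real.sqrt 0)) :=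
      (Real.continuous_sqrt.continuousAt).tendsto.comp hv
    simpa [Real.sqrt_sq (norm_nonneg _), Real.sqrt_zero] using h1
  have hu0 : Tendsto (fun k => y k - x k + μ • B z) atTop (𝓝 0) :=
    sqrt_norm_tendsto _ hSumA.tendsto_atTop_zero
  have hd0 : Tendsto (fun k => B (x k) - B z) atTop (𝓝 0) :=
    sqrt_norm_tendsto _ hSumD.tendsto_atTop_zero
  have hBx : Tendsto (fun k => B (x k)) atTop (𝓝 (B z)) := by
    have := hd0.add_const (B z)
    simpa using this
  -- square-summable increments
  have hincY : Summable (fun k => ‖y (k + 1) - y k‖ ^ 2) := by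
    refine Summable.of_nonneg_of_le (fun k => sq_nonneg _) (fun k => ?_)
      ((hSumA.mul_left (2 * h ^ 2)).add (hSumD.mul_left (2 * (h * μ) ^ 2)))
    have hid : y (k + 1) - y k = (-h) • (y k - x k + μ • B z) + (-(h * μ)) • (B (x k) - B z) := by
      rw [hyk k]; module
    rw [hid]
    have h1 := norm_add_sq_real ((-h) • (y k - x k + μ • B z)) ((-(h * μ)) • (B (x k) - B z))
    have h2 := abs_real_inner_le_norm ((-h) • (y k - x k + μ • B z)) ((-(h * μ)) • (B (x k) - B z))
    have h3 : ∀ (c : ℝ) (v : H), ‖c • v‖ ^ 2 = c ^ 2 * ‖v‖ ^ 2 := by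
      intro c v; rw [norm_smul]; simp [mul_pow, sq_abs]
    have h4 := sq_nonneg (‖(-h) • (y k - x k + μ • B z)‖ - ‖(-(h * μ)) • (B (x k) - B z)‖)
    have h5 := le_abs_self ⟪(-h) • (y k - x k + μ • B z), (-(h * μ)) • (B (x k) - B z)⟫
    rw [h3, h3] at h1
    nlinarith [h1, h2, h4, h5, h3 (-h) (y k - x k + μ • B z), h3 (-(h * μ)) (B (x k) - B z)]
  have hincX : Summable (fun k => ‖x (k + 1) - x k‖ ^ 2) := by
    refine Summable.of_nonneg_of_le (fun k => sq_nonneg _) (fun k => ?_) hincY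
    have h1 : ‖x (k + 1) - x k‖ ≤ ‖y (k + 1) - y k‖ := by
      rw [hxk (k + 1), hxk k]
      exact prox_nonexp hbot htop hμ0 hprox _ _
    exact pow_le_pow_left₀ (norm_nonneg _) h1 2
  -- boundedness
  set Cb : ℝ := ‖y 0 - q‖ + ‖q‖ with hCb
  have hyb : ∀ k, ‖y k‖ ≤ Cb := by
    intro k
    have h1 : ‖y k - q‖ ≤ ‖y 0 - q‖ := sq_le_imp (norm_nonneg _) (norm_nonneg _) (hVle k)
    calc ‖y k‖ = ‖(y k - q) + q‖ := by rw [sub_add_cancel]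
      _ ≤ ‖y k - q‖ + ‖q‖ := norm_add_le _ _
      _ ≤ Cb := by rw [hCb]; linarith
  have hub : ∀ k, ‖y k - x k + μ • B z‖ ^ 2 ≤ ‖y 0 - q‖ ^ 2 / cA := by
    intro k
    have h1 := step z hz k
    have h2 : 0 ≤ ‖y (k + 1) - (z - μ • B z)‖ ^ 2 := sq_nonneg _
    have h3 : 0 ≤ cD * ‖B (x k) - B z‖ ^ 2 := mul_nonneg hcD.le (sq_nonneg _)
    rw [le_div_iff₀ hcA]
    have := hVle k
    nlinarith
  set Cx : ℝ := Cb + Real.sqrt (‖y 0 - q‖ ^ 2 / cA) + ‖μ • B z‖ with hCx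
  have hxb : ∀ k, ‖x k‖ ≤ Cx := by
    intro k
    have hid : x k = (y k - (y k - x k + μ • B z)) + μ • B z := by module
    have h1 : ‖y k - x k + μ • B z‖ ≤ Real.sqrt (‖y 0 - q‖ ^ 2 / cA) := by
      rw [show ‖y k - x k + μ • B z‖ = Real.sqrt (‖y k - x k + μ • B z‖ ^ 2) by
        rw [Real.sqrt_sq (norm_nonneg _)]]
      exact Real.sqrt_le_sqrt (hub k)
    calc ‖x k‖ = ‖(y k - (y k - x k + μ • B z)) + μ • B z‖ := by rw [← hid]
      _ ≤ ‖y k - (y k - x k + μ • B z)‖ + ‖μ • B z‖ := norm_add_le _ _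
      _ ≤ (‖y k‖ + ‖y k - x k + μ • B z‖) + ‖μ • B z‖ := by
          have := norm_sub_le (y k) (y k - x k + μ • B z); linarith
      _ ≤ Cx := by rw [hCx]; have := hyb k; linarith
  -- the weak-cluster-point characterization
  have cluster : ∀ ns : ℕ → ℕ, Tendsto ns atTop atTop → ∀ w : H,
      (∀ v : H, Tendsto (fun j => ⟪y (ns j), v⟫) atTop (𝓝 ⟪w, v⟫)) →
      prox w = w + μ • B z ∧ B (prox w) = B z ∧ InSubdiff Φ (prox w) (-B (prox w)) ∧
        w = prox w - μ • B (prox w) := by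
    intro ns hns w hw
    have huns : Tendsto (fun j => y (ns j) - x (ns j) + μ • B z) atTop (𝓝 0) :=
      hu0.comp hns
    have hdns : Tendsto (fun j => B (x (ns j))) atTop (𝓝 (B z)) := hBx.comp hns
    -- weak convergence of x ∘ ns to p := w + μ • B z
    have hxweak : ∀ v : H, Tendsto (fun j => ⟪x (ns j), v⟫) atTop (𝓝 ⟪w + μ • B z, v⟫) := by
      intro v
      have hiu : Tendsto (fun j => ⟪y (ns j) - x (ns j) + μ • B z, v⟫) atTop (𝓝 0) := by
        have hcont : Continuous fun q : H => ⟪q, v⟫ := continuous_id.inner continuous_const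
        have := (hcont.tendsto 0).comp huns
        simpa [Function.comp_def] using this
      have heq : ∀ j, ⟪x (ns j), v⟫ = ⟪y (ns j), v⟫ - ⟪y (ns j) - x (ns j) + μ • B z, v⟫
          + ⟪μ • B z, v⟫ := by
        intro j
        rw [← inner_sub_left, ← inner_add_left]
        congr 1
        module
      have hlim := ((hw v).sub hiu).add_const (⟪μ • B z, v⟫ : ℝ)
      rw [sub_zero] at hlim
      have : (⟪w, v⟫ + ⟪μ • B z, v⟫ : ℝ) = ⟪w + μ • B z, v⟫ := (inner_add_left _ _ _).symm
      rw [this] at hlim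
      exact hlim.congr (fun j => (heq j).symm)
    have hxwbd : ∀ (r : H), ∀ j, ‖x (ns j) - r‖ ≤ Cx + ‖r‖ := by
      intro r j
      calc ‖x (ns j) - r‖ ≤ ‖x (ns j)‖ + ‖r‖ := norm_sub_le _ _
        _ ≤ Cx + ‖r‖ := by have := hxb (ns j); linarith
    -- Step A : B (w + μ • B z) = B z
    have hBp : B (w + μ • B z) = B z := by
      set p : H := w + μ • B z with hp
      have hstr : Tendsto (fun j => B (x (ns j)) - B p) atTop (𝓝 (B z - B p)) :=
        hdns.sub_const _
      have hwk : ∀ v : H, Tendsto (fun j => ⟪x (ns j) - p, v⟫) atTop (𝓝 ⟪(0 : H), v⟫) := by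
        intro v
        have := (hxweak v).sub_const ⟪p, v⟫
        have e : ∀ j, ⟪x (ns j), v⟫ - ⟪p, v⟫ = ⟪x (ns j) - p, v⟫ := fun j =>
          (inner_sub_left _ _ _).symm
        simp only [sub_self] at this
        have e2 : (⟪(0 : H), v⟫ : ℝ) = 0 := inner_zero_left v
        rw [e2]
        exact this.congr e
      have hlim := inner_tendsto_strong_weak hstr hwk (hxwbd p)
      have hle : ∀ j, β * ‖B (x (ns j)) - B p‖ ^ 2 ≤ ⟪B (x (ns j)) - B p, x (ns j) - p⟫ :=
        fun j => hcoco _ _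
      have hlhs : Tendsto (fun j => β * ‖B (x (ns j)) - B p‖ ^ 2) atTop
          (𝓝 (β * ‖B z - B p‖ ^ 2)) := by
        have h1 : Tendsto (fun j => ‖B (x (ns j)) - B p‖) atTop (𝓝 ‖B z - B p‖) :=
          hstr.norm
        exact ((h1.pow 2).const_mul β)
      have hfin : β * ‖B z - B p‖ ^ 2 ≤ ⟪B z - B p, (0 : H)⟫ :=
        le_of_tendsto_of_tendsto' hlhs hlim hle
      rw [inner_zero_right] at hfin
      have h0 : ‖B z - B p‖ ^ 2 ≤ 0 := by nlinarith
      exact (sub_eq_zero.mp (norm_sq_zero_of_nonpos h0)).symm ▸ rfl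
    -- Step B : prox w = w + μ • B z
    have hproxw : prox w = w + μ • B z := by
      set p : H := w + μ • B z with hp
      have hsmul : ∀ k, (1 / μ) • (y k - x k + μ • B z) = (1 / μ) • (y k - x k) + B z := by
        intro k
        rw [smul_add, smul_smul, one_div, inv_mul_cancel₀ (ne_of_gt hμ0), one_smul]
      -- strong convergence of the subgradients
      set c : H := -B z - (1 / μ) • (w - prox w) with hc
      have hstr : Tendsto (fun j => (1 / μ) • (y (ns j) - x (ns j)) - (1 / μ) • (w - prox w))
          atTop (𝓝 c) := by
        have h1 : Tendsto (fun j => (1 / μ) • (y (ns j) - x (ns j) + μ • B z)) atTop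
            (𝓝 ((1 / μ) • (0 : H))) := huns.const_smul (1 / μ)
        rw [smul_zero] at h1
        have h2 := h1.sub_const (B z + (1 / μ) • (w - prox w))
        rw [zero_sub] at h2
        have e : ∀ j, (1 / μ) • (y (ns j) - x (ns j) + μ • B z) - (B z + (1 / μ) • (w - prox w))
            = (1 / μ) • (y (ns j) - x (ns j)) - (1 / μ) • (w - prox w) := by
          intro j
          rw [hsmul (ns j)]
          abel
        have e2 : -(B z + (1 / μ) • (w - prox w)) = c := by rw [hc]; abel
        rw [e2] at h2
        exact h2.congr e
      have hwk : ∀ v : H, Tendsto (fun j => ⟪x (ns j) - prox w, v⟫) atTop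
          (𝓝 ⟪p - prox w, v⟫) := by
        intro v
        have := (hxweak v).sub_const ⟪prox w, v⟫
        have e : ∀ j, ⟪x (ns j), v⟫ - ⟪prox w, v⟫ = ⟪x (ns j) - prox w, v⟫ := fun j =>
          (inner_sub_left _ _ _).symm
        have e2 : (⟪p, v⟫ - ⟪prox w, v⟫ : ℝ) = ⟪p - prox w, v⟫ := (inner_sub_left _ _ _).symm
        rw [e2] at this
        exact this.congr e
      have hlim := inner_tendsto_strong_weak hstr hwk (hxwbd (prox w))
      have hpos : ∀ j, 0 ≤ ⟪(1 / μ) • (y (ns j) - x (ns j)) - (1 / μ) • (w - prox w),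
          x (ns j) - prox w⟫ := by
        intro j
        have := subdiff_mono hbot htop (hprox (y (ns j))) (hprox w)
        rwa [← hxk (ns j)] at this
      have hge : 0 ≤ ⟪c, p - prox w⟫ :=
        le_of_tendsto_of_tendsto' tendsto_const_nhds hlim (fun j => hpos j)
      have hmu1 : (1 / μ) • (μ • B z) = B z := by
        rw [smul_smul, one_div, inv_mul_cancel₀ (ne_of_gt hμ0), one_smul]
      have hce : c = (1 / μ) • (prox w - p) := by
        rw [hc, hp]
        match_scalars <;> field_simp
      rw [hce, real_inner_smul_left] at hge
      have e3 : ⟪prox w - p, p - prox w⟫ = -‖p - prox w‖ ^ 2 := by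
        rw [show prox w - p = -(p - prox w) by abel, inner_neg_left,
          real_inner_self_eq_norm_sq]
      rw [e3] at hge
      have hμinv : 0 < 1 / μ := by positivity
      have h0 : ‖p - prox w‖ ^ 2 ≤ 0 := by nlinarith
      exact (sub_eq_zero.mp (norm_sq_zero_of_nonpos h0)).symm
    have hBpw : B (prox w) = B z := by rw [hproxw]; exact hBp
    refine ⟨hproxw, hBpw, ?_, ?_⟩
    · have h1 := hprox w
      have e : (1 / μ) • (w - prox w) = -B (prox w) := by
        rw [hBpw, hproxw]
        have e0 : w - (w + μ • B z) = -(μ • B z) := by abel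
        rw [e0, smul_neg, smul_smul, one_div, inv_mul_cancel₀ (ne_of_gt hμ0), one_smul]
      rwa [e] at h1
    · rw [hBpw, hproxw]
      abel
  -- extraction of the weak limit
  obtain ⟨φ0, hφ0, w0, hw0⟩ := exists_weak_limit_subseq y Cb hyb
  have hw0cl := cluster φ0 hφ0.tendsto_atTop w0 hw0
  -- convergence of ‖y k - w'‖² for any fixed point w'
  have normlim : ∀ w' : H, InSubdiff Φ (prox w') (-B (prox w')) →
      w' = prox w' - μ • B (prox w') →
      ∃ l : ℝ, Tendsto (fun k => ‖y k - w'‖ ^ 2) atTop (𝓝 l) := by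
    intro w' hw1 hw2
    have hanti : Antitone (fun k => ‖y k - w'‖ ^ 2) := by
      apply antitone_nat_of_succ_le
      intro k
      have h1 := step (prox w') hw1 k
      rw [← hw2] at h1
      nlinarith [mul_nonneg hcA.le (sq_nonneg ‖y k - x k + μ • B (prox w')‖),
        mul_nonneg hcD.le (sq_nonneg ‖B (x k) - B (prox w')‖)]
    have hbdd : BddBelow (Set.range fun k => ‖y k - w'‖ ^ 2) := by
      refine ⟨0, fun v hv => ?_⟩
      obtain ⟨k, rfl⟩ := hv
      exact sq_nonneg _
    exact ⟨_, tendsto_atTop_ciInf hanti hbdd⟩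
  -- weak convergence of the full sequence y
  have hyweak : ∀ v : H, Tendsto (fun k => ⟪y k, v⟫) atTop (𝓝 ⟪w0, v⟫) := by
    intro v
    apply tendsto_of_subseq_tendsto
    intro ns hns
    obtain ⟨φ1, hφ1, p1, hp1⟩ := exists_weak_limit_subseq (y ∘ ns) Cb (fun k => hyb _)
    have hns1 : Tendsto (ns ∘ φ1) atTop atTop := hns.comp hφ1.tendsto_atTop
    have hp1w : ∀ v' : H, Tendsto (fun j => ⟪y ((ns ∘ φ1) j), v'⟫) atTop (𝓝 ⟪p1, v'⟫) :=
      fun v' => hp1 v'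
    have hcl1 := cluster (ns ∘ φ1) hns1 p1 hp1w
    obtain ⟨l0, hl0⟩ := normlim w0 hw0cl.2.2.1 hw0cl.2.2.2
    obtain ⟨l1, hl1⟩ := normlim p1 hcl1.2.2.1 hcl1.2.2.2
    have hdiff : Tendsto (fun k => ⟪y k, w0 - p1⟫) atTop
        (𝓝 ((l1 - l0 + ‖w0‖ ^ 2 - ‖p1‖ ^ 2) / 2)) := by
      have e : ∀ k : ℕ, ⟪y k, w0 - p1⟫
          = (‖y k - p1‖ ^ 2 - ‖y k - w0‖ ^ 2 + ‖w0‖ ^ 2 - ‖p1‖ ^ 2) / 2 := by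
        intro k
        have e1 := norm_sub_sq_real (y k) p1
        have e2 := norm_sub_sq_real (y k) w0
        rw [inner_sub_right]
        linarith
      have hlim : Tendsto (fun k => (‖y k - p1‖ ^ 2 - ‖y k - w0‖ ^ 2 + ‖w0‖ ^ 2 - ‖p1‖ ^ 2) / 2)
          atTop (𝓝 ((l1 - l0 + ‖w0‖ ^ 2 - ‖p1‖ ^ 2) / 2)) := by
        have h1 := ((hl1.sub hl0).add_const (‖w0‖ ^ 2)).sub_const (‖p1‖ ^ 2)
        exact h1.div_const 2
      exact hlim.congr (fun k => (e k).symm)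
    have ha := hdiff.comp hφ0.tendsto_atTop
    have hb := hdiff.comp hns1
    have e0 : ⟪w0, w0 - p1⟫ = (l1 - l0 + ‖w0‖ ^ 2 - ‖p1‖ ^ 2) / 2 :=
      tendsto_nhds_unique (hw0 (w0 - p1)) ha
    have e1 : ⟪p1, w0 - p1⟫ = (l1 - l0 + ‖w0‖ ^ 2 - ‖p1‖ ^ 2) / 2 :=
      tendsto_nhds_unique (hp1w (w0 - p1)) hb
    have hzero : ‖w0 - p1‖ ^ 2 ≤ 0 := by
      have e2 : ‖w0 - p1‖ ^ 2 = ⟪w0 - p1, w0 - p1⟫ := (real_inner_self_eq_norm_sq _).symm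
      rw [e2, inner_sub_left, e0, e1]
      linarith
    have hp1w0 : p1 = w0 := (sub_eq_zero.mp (norm_sq_zero_of_nonpos hzero)).symm
    refine ⟨φ1, ?_⟩
    have := hp1w v
    rw [hp1w0] at this
    exact this
  -- final packaging
  refine ⟨w0, hyweak, hw0cl.2.2.1, ?_, ?_, hincX, hincY⟩
  · intro v
    have hiu : Tendsto (fun k => ⟪y k - x k + μ • B z, v⟫) atTop (𝓝 0) := by
      have hcont : Continuous fun q : H => ⟪q, v⟫ := continuous_id.inner continuous_const
      have := (hcont.tendsto 0).comp hu0
      simpa [Function.comp_def] using this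
    have heq : ∀ k, ⟪x k, v⟫ = ⟪y k, v⟫ - ⟪y k - x k + μ • B z, v⟫ + ⟪μ • B z, v⟫ := by
      intro k
      rw [← inner_sub_left, ← inner_add_left]
      congr 1
      module
    have hlim := ((hyweak v).sub hiu).add_const (⟪μ • B z, v⟫ : ℝ)
    rw [sub_zero] at hlim
    have e : (⟪w0, v⟫ + ⟪μ • B z, v⟫ : ℝ) = ⟪prox w0, v⟫ := by
      rw [← inner_add_left, ← hw0cl.1]
    rw [e] at hlim
    exact hlim.congr (fun k => (heq k).symm)
  · rw [hw0cl.2.1]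
    exact hBx
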